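/- The operator U on Schwartz functions defined via the Fourier multiplier 1/(iξ + m^2), i.e. U(f)(t) = (1/2π) ∫ e^{-iξt} f̂(ξ)/(iξ + m^2) dξ, coincides with convolution with G: U(f)(t) = ∫_{-∞}^t e^{-m^2(t-s)} f(s) ds. -/

import Mathlib

open MeasureTheory Complex Real Set Filter
open scoped FourierTransform

lemma fourier_conv (φ ψ : ℝ → ℂ) (hφ : Integrable φ) (hψ : Integrable ψ) (ξ : ℝ) :
    𝓕 (fun x => ∫ u, φ u * ψ (x - u)) ξ = 𝓕 φ ξ * 𝓕 ψ ξ := by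
  set c : ℝ → ℂ := fun x => Complex.exp (↑(-2 * π * x * ξ) * Complex.I) with hc
  have hcm : ∀ x y : ℝ, c (x + y) = c x * c y := by
    intro x y
    simp only [hc, ← Complex.exp_add]
    congr 1
    push_cast
    ring
  have hcnorm : ∀ x : ℝ, ‖c x‖ = 1 := fun x => Complex.norm_exp_ofReal_mul_I _
  have hccont : Continuous c := by
    apply Complex.continuous_exp.comp
    fun_prop
  have key : Integrable (Function.uncurry fun x u => c x * (φ u * ψ (x - u)))
      (volume.prod volume) := by
    have h1 : Integrable (fun p : ℝ × ℝ => φ p.2 * ψ (p.1 - p.2)) (volume.prod volume) := by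
      simpa using hφ.convolution_integrand (ContinuousLinearMap.mul ℝ ℂ) hψ
    exact h1.bdd_mul (hccont.comp continuous_fst).aestronglyMeasurable
      (c := 1) (Eventually.of_forall fun p => le_of_eq (hcnorm p.1))
  rw [Real.fourier_real_eq_integral_exp_smul]
  simp only [smul_eq_mul, ← hc]
  calc ∫ x, c x * ∫ u, φ u * ψ (x - u)
      = ∫ x, ∫ u, c x * (φ u * ψ (x - u)) := by
        congr 1; ext x; rw [integral_const_mul]
    _ = ∫ u, ∫ x, c x * (φ u * ψ (x - u)) := integral_integral_swap key
    _ = ∫ u, (φ u * c u) * ∫ x, c x * ψ x := by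
        congr 1; ext u
        have : ∫ x, c x * ψ (x - u) = ∫ x, c (x + u) * ψ x := by
          rw [← integral_add_right_eq_self (fun x => c x * ψ (x - u)) u]
          simp
        rw [← integral_const_mul]
        rw [show (fun x => c x * (φ u * ψ (x - u))) = fun x => φ u * (c x * ψ (x - u)) by
          ext x; ring]
        rw [integral_const_mul, this]
        simp_rw [hcm]
        rw [show (fun x => c x * c u * ψ x) = fun x => c u * (c x * ψ x) by ext x; ring,
          integral_const_mul]
        rw [integral_const_mul]
        ring
    _ = (∫ u, φ u * c u) * ∫ x, c x * ψ x := by rw [integral_mul_const]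
    _ = 𝓕 φ ξ * 𝓕 ψ ξ := by
        rw [Real.fourier_real_eq_integral_exp_smul,
          Real.fourier_real_eq_integral_exp_smul]
        simp only [smul_eq_mul, ← hc]
        congr 1
        exact integral_congr_ae (Eventually.of_forall fun u => mul_comm _ _)

lemma G0_integrable (m : ℝ) (hm : 0 < m) :
    Integrable (Set.indicator (Set.Ioi (0:ℝ)) (fun u => Complex.exp (-(m:ℂ)^2 * u))) := by
  rw [integrable_indicator_iff measurableSet_Ioi]
  have : IntegrableOn (fun u : ℝ => Real.exp (-(m^2) * u)) (Set.Ioi 0) :=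
    exp_neg_integrableOn_Ioi 0 (by positivity)
  apply this.integrable.mono'
  · apply Continuous.aestronglyMeasurable
    apply Complex.continuous_exp.comp
    fun_prop
  · filter_upwards with u
    rw [Complex.norm_exp]
    apply le_of_eq
    have : (-(m:ℂ)^2 * u).re = -m^2 * u := by
      rw [show -(m:ℂ)^2 * u = ((-m^2 * u : ℝ) : ℂ) by push_cast; ring, Complex.ofReal_re]
    rw [this]

lemma cexp_integral_Ioi (c : ℂ) (hc : 0 < c.re) :
    ∫ u in Set.Ioi (0:ℝ), Complex.exp (-c * u) = 1 / c := by
  have hc0 : c ≠ 0 := fun h => by simp [h] at hc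
  have hderiv : ∀ x ∈ Set.Ici (0:ℝ), HasDerivAt (fun u : ℝ => -Complex.exp (-c * u) / c)
      (Complex.exp (-c * x)) x := by
    intro x _
    have h0 : HasDerivAt (fun u : ℝ => -c * (u:ℂ)) (-c) x := by
      simpa using ((hasDerivAt_id (x:ℂ)).const_mul (-c)).comp_ofReal
    have h1 : HasDerivAt (fun u : ℝ => -(Complex.exp (-c * u) / c)) _ x := (h0.cexp.div_const c).neg
    convert h1 using 1
    · ext u; rw [neg_div]
    · rw [mul_neg, neg_div, neg_neg, mul_div_assoc, div_self hc0, mul_one]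
  have htend : Tendsto (fun u : ℝ => -Complex.exp (-c * u) / c) atTop (nhds 0) := by
    rw [show (0:ℂ) = -0/c by simp]
    apply Tendsto.div_const
    apply Tendsto.neg
    rw [tendsto_zero_iff_norm_tendsto_zero]
    have : (fun u : ℝ => ‖Complex.exp (-c * u)‖) = fun u : ℝ => Real.exp (-c.re * u) := by
      ext u
      rw [Complex.norm_exp]
      congr 1
      simp
    rw [this]
    rw [Real.tendsto_exp_comp_nhds_zero]
    exact Tendsto.const_mul_atTop_of_neg (neg_neg_iff_pos.mpr hc) tendsto_id
  have := integral_Ioi_of_hasDerivAt_of_tendsto (a := 0)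
    (by exact (hderiv 0 (by simp)).continuousAt.continuousWithinAt) (fun x (hx : x ∈ Set.Ioi 0) => hderiv x (Set.mem_Ici.mpr (le_of_lt hx)))
    ?_ htend
  · rw [this]
    rw [Complex.ofReal_zero, mul_zero, Complex.exp_zero, zero_sub, neg_div, neg_neg, one_div]
  · have : IntegrableOn (fun u : ℝ => Real.exp (-c.re * u)) (Set.Ioi 0) :=
      exp_neg_integrableOn_Ioi 0 hc
    apply this.integrable.mono'
    · apply Continuous.aestronglyMeasurable
      apply Complex.continuous_exp.comp
      fun_prop
    · filter_upwards with u
      rw [Complex.norm_exp]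
      apply le_of_eq
      congr 1
      simp

lemma fourier_G0 (m : ℝ) (hm : 0 < m) (ξ : ℝ) :
    𝓕 (Set.indicator (Set.Ioi (0:ℝ)) fun u => Complex.exp (-(m:ℂ)^2 * u)) ξ
      = 1 / ((m:ℂ)^2 + 2 * π * ξ * Complex.I) := by
  have hre : ((m:ℂ)^2 + 2 * π * ξ * Complex.I).re = m^2 := by
    simp [Complex.add_re, Complex.mul_re, ← Complex.ofReal_pow]
  rw [Real.fourier_real_eq_integral_exp_smul]
  rw [show (∫ v : ℝ, Complex.exp (↑(-2 * π * v * ξ) * Complex.I) •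
      Set.indicator (Set.Ioi (0:ℝ)) (fun u => Complex.exp (-(m:ℂ)^2 * u)) v)
      = ∫ v : ℝ, Set.indicator (Set.Ioi (0:ℝ))
        (fun u : ℝ => Complex.exp (-((m:ℂ)^2 + 2 * π * ξ * Complex.I) * u)) v by
    congr 1; ext v
    by_cases hv : v ∈ Set.Ioi (0:ℝ)
    · rw [Set.indicator_of_mem hv, Set.indicator_of_mem hv, smul_eq_mul, ← Complex.exp_add]
      congr 1
      push_cast
      ring
    · rw [Set.indicator_of_notMem hv, Set.indicator_of_notMem hv, smul_zero]]
  rw [integral_indicator measurableSet_Ioi]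
  exact cexp_integral_Ioi _ (by rw [hre]; positivity)

/-- The Fourier multiplier `1/(iξ + m²)` (with the convention
`f̂(ξ) = ∫ e^{-iξs} f(s) ds`, inverse `(1/2π) ∫ e^{iξt} · dξ`) acts as
convolution with the Green's function `G(t) = e^{-m² t} 1_{t>0}`. -/
theorem stmt3 (m : ℝ) (hm : 0 < m) (f : SchwartzMap ℝ ℂ)
    (fhat : ℝ → ℂ)
    (hfhat : ∀ ξ : ℝ, fhat ξ = ∫ s : ℝ, Complex.exp (-Complex.I * (ξ : ℂ) * (s : ℂ)) * f s)
    (t : ℝ) :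
    (1 / (2 * (Real.pi : ℂ))) *
        ∫ ξ : ℝ, Complex.exp (Complex.I * (ξ : ℂ) * (t : ℂ)) * fhat ξ /
          (Complex.I * (ξ : ℂ) + (m : ℂ)^2)
      = ∫ s in Set.Iic t, Complex.exp (-(m : ℂ)^2 * ((t : ℂ) - (s : ℂ))) * f s := by
  set G₀ : ℝ → ℂ := Set.indicator (Set.Ioi (0:ℝ)) (fun u => Complex.exp (-(m:ℂ)^2 * u)) with hG₀
  have hG₀i : Integrable G₀ := G0_integrable m hm
  have hfi : Integrable (⇑f) := f.integrable
  set g : ℝ → ℂ := fun x => ∫ u, G₀ u * f (x - u) with hgdef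
  have hconv : g = MeasureTheory.convolution G₀ (⇑f) (ContinuousLinearMap.mul ℝ ℂ) volume := by
    ext x
    rw [MeasureTheory.convolution_def]
    rfl
  have hgi : Integrable g := by
    rw [hconv]; exact hG₀i.integrable_convolution _ hfi
  have hgc : Continuous g := by
    rw [hconv]
    obtain ⟨C, -, hC⟩ := f.decay 0 0
    have hb : BddAbove (Set.range fun x => ‖f x‖) := by
      refine ⟨C, ?_⟩
      rintro y ⟨x, rfl⟩
      simpa [norm_iteratedFDeriv_zero] using hC x
    exact hb.continuous_convolution_right_of_integrable (ContinuousLinearMap.mul ℝ ℂ)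
      hG₀i f.continuous
  -- Fourier transform of f in Mathlib convention
  have h𝓕f : ∀ ξ : ℝ, 𝓕 (⇑f) ξ = fhat (2*π*ξ) := by
    intro ξ
    rw [hfhat, Real.fourier_real_eq_integral_exp_smul]
    congr 1
    ext s
    rw [smul_eq_mul]
    congr 1
    push_cast
    ring
  have hFg : ∀ ξ : ℝ, 𝓕 g ξ = fhat (2*π*ξ) / ((m:ℂ)^2 + 2 * π * ξ * Complex.I) := by
    intro ξ
    rw [hgdef]
    rw [fourier_conv G₀ (⇑f) hG₀i hfi ξ, fourier_G0 m hm ξ, h𝓕f ξ]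
    rw [one_div, inv_mul_eq_div]
  have hdenom_ne : ∀ ξ : ℝ, ((m:ℂ)^2 + 2 * π * ξ * Complex.I) ≠ 0 := by
    intro ξ h
    have h1 : ((m:ℂ)^2 + 2 * π * ξ * Complex.I).re = m^2 := by
      simp [Complex.add_re, Complex.mul_re, ← Complex.ofReal_pow]
    rw [h] at h1
    simp only [Complex.zero_re] at h1
    nlinarith
  have habs_ge : ∀ ξ : ℝ, m^2 ≤ ‖(m:ℂ)^2 + 2 * π * ξ * Complex.I‖ := by
    intro ξ
    have h1 : ((m:ℂ)^2 + 2 * π * ξ * Complex.I).re = m^2 := by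
      simp [Complex.add_re, Complex.mul_re, ← Complex.ofReal_pow]
    calc m^2 = |m^2| := (abs_of_pos (by positivity)).symm
      _ = |((m:ℂ)^2 + 2 * π * ξ * Complex.I).re| := by rw [h1]
      _ ≤ _ := Complex.abs_re_le_norm _
  have hFgi : Integrable (𝓕 g) := by
    have heq : 𝓕 g = fun ξ : ℝ => 𝓕 (⇑f) ξ / ((m:ℂ)^2 + 2 * π * ξ * Complex.I) := by
      ext ξ; rw [hFg ξ, h𝓕f ξ]
    rw [heq]
    have hFfi : Integrable (𝓕 (⇑f)) := (SchwartzMap.fourierTransformCLM ℂ f).integrable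
    have hFfc : Continuous (𝓕 (⇑f)) := (SchwartzMap.fourierTransformCLM ℂ f).continuous
    apply Integrable.mono' (hFfi.norm.div_const (m^2))
    · exact (hFfc.div (by fun_prop) hdenom_ne).aestronglyMeasurable
    · filter_upwards with ξ
      rw [norm_div]
      exact div_le_div_of_nonneg_left (norm_nonneg _) (by positivity) (habs_ge ξ)
  have hinv : 𝓕⁻ (𝓕 g) t = g t := hgi.fourierInv_fourier_eq hFgi hgc.continuousAt
  -- RHS equals g t
  have hrhs : (∫ s in Set.Iic t, Complex.exp (-(m:ℂ)^2 * ((t:ℂ) - s)) * f s) = g t := by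
    set F : ℝ → ℂ := fun s => Complex.exp (-(m:ℂ)^2 * ((t:ℂ) - s)) * f s with hF
    have h1 : ∀ u : ℝ, G₀ u * f (t - u) = Set.indicator (Set.Iio t) F (t - u) := by
      intro u
      by_cases hu : u ∈ Set.Ioi (0:ℝ)
      · rw [hG₀, Set.indicator_of_mem hu,
          Set.indicator_of_mem (by simp only [Set.mem_Iio]; linarith [Set.mem_Ioi.mp hu])]
        rw [hF]
        congr 2
        push_cast
        ring
      · have hu' : u ≤ 0 := not_lt.mp (by simpa using hu)
        rw [hG₀, Set.indicator_of_notMem hu,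
          Set.indicator_of_notMem (by simp only [Set.mem_Iio, not_lt]; linarith), zero_mul]
    calc ∫ s in Set.Iic t, F s = ∫ s in Set.Iio t, F s :=
          integral_Iic_eq_integral_Iio' (measure_singleton t)
      _ = ∫ s, Set.indicator (Set.Iio t) F s := (integral_indicator measurableSet_Iio).symm
      _ = ∫ u, Set.indicator (Set.Iio t) F (t - u) :=
          (integral_sub_left_eq_self (Set.indicator (Set.Iio t) F) volume t).symm
      _ = g t := by rw [hgdef]; exact integral_congr_ae (Eventually.of_forall fun u => (h1 u).symm)
  rw [hrhs, ← hinv]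
  -- now handle LHS
  set h : ℝ → ℂ := fun w => Complex.exp (Complex.I * w * t) * fhat w / (Complex.I * w + (m:ℂ)^2)
    with hh
  have hcomp : (∫ ξ : ℝ, h (2 * π * ξ)) = ((2*π)⁻¹ : ℝ) • ∫ w : ℝ, h w := by
    rw [MeasureTheory.Measure.integral_comp_mul_left h (2*π)]
    congr 1
    rw [abs_of_pos (by positivity)]
  have hinv_eq : 𝓕⁻ (𝓕 g) t = ∫ ξ : ℝ, h (2 * π * ξ) := by
    rw [Real.fourierInv_eq_fourier_neg,
      Real.fourier_real_eq_integral_exp_smul]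
    congr 1
    ext ξ
    rw [smul_eq_mul, hFg ξ]
    show _ = Complex.exp (Complex.I * ((2*π*ξ : ℝ):ℂ) * t) * fhat (2*π*ξ) /
      (Complex.I * ((2*π*ξ : ℝ):ℂ) + (m:ℂ)^2)
    rw [mul_div_assoc]
    congr 1
    · congr 1
      push_cast
      ring
    · congr 1
      push_cast
      ring
  rw [hinv_eq, hcomp, Complex.real_smul]
  push_cast
  ring
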